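/- If A is a strictly increasing sequence (a_n) of positive integers with \sum_{n} 1/a_n = \infty, and B = {(a_n + m, m) : n, m \in \mathbb{N}}, then \sum_{(x,y) \in B} 1/(x^2 + y^2) = \infty. -/

import Mathlib

open scoped ENNReal

/-- The set B = {(a_n + m, m) : n, m ∈ ℕ, m ≥ 1}. -/
def gridSet (a : ℕ → ℕ) : Set (ℕ × ℕ) :=
  {p | ∃ n, ∃ m, 1 ≤ m ∧ p = (a n + m, m)}

theorem stmt0 (a : ℕ → ℕ) (hpos : ∀ n, 0 < a n) (hmono : StrictMono a)
    (hdiv : ∑' n, (1 / (a n : ℝ≥0∞)) = ⊤) :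
    ∑' p : gridSet a, (1 / ((p.1.1 : ℝ≥0∞) ^ 2 + (p.1.2 : ℝ≥0∞) ^ 2)) = ⊤ := by
  set g : ℕ × ℕ → ℝ≥0∞ := fun p => 1 / ((p.1 : ℝ≥0∞) ^ 2 + (p.2 : ℝ≥0∞) ^ 2) with hg
  set F : (Σ n : ℕ, Fin (a n)) → gridSet a := fun x =>
    ⟨(a x.1 + (x.2 + 1), x.2 + 1), ⟨x.1, x.2 + 1, Nat.le_add_left 1 x.2, rfl⟩⟩ with hF
  have hFinj : Function.Injective F := by
    rintro ⟨n1, m1⟩ ⟨n2, m2⟩ h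
    have h' := congrArg Subtype.val h
    simp only [hF, Prod.mk.injEq] at h'
    obtain ⟨h1, h2⟩ := h'
    have hm : (m1 : ℕ) = (m2 : ℕ) := by omega
    have hn : n1 = n2 := hmono.injective (by omega)
    subst hn
    simp [Fin.ext_iff, hm]
  have key : ∑' x, g (F x).1 ≤ ∑' p : gridSet a, g p.1 :=
    ENNReal.tsum_comp_le_tsum_of_injective hFinj _
  have hlow : ∀ n : ℕ, 1 / (5 * (a n : ℝ≥0∞)) ≤ ∑' m : Fin (a n), g (F ⟨n, m⟩).1 := by
    intro n
    have hterm : ∀ m : Fin (a n),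
        1 / (5 * (a n : ℝ≥0∞) ^ 2) ≤ g (F ⟨n, m⟩).1 := by
      intro m
      simp only [hg, hF, one_div]
      apply ENNReal.inv_le_inv.mpr
      have hnat : ((a n + (m + 1)) ^ 2 + (m + 1) ^ 2 : ℕ) ≤ 5 * a n ^ 2 := by
        have := m.2
        nlinarith
      calc ((a n + (m + 1) : ℕ) : ℝ≥0∞) ^ 2 + (((m : ℕ) + 1 : ℕ) : ℝ≥0∞) ^ 2
          = (((a n + (m + 1)) ^ 2 + (m + 1) ^ 2 : ℕ) : ℝ≥0∞) := by push_cast; ring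
        _ ≤ ((5 * a n ^ 2 : ℕ) : ℝ≥0∞) := by exact_mod_cast Nat.cast_le.mpr hnat
        _ = 5 * (a n : ℝ≥0∞) ^ 2 := by push_cast; ring
    calc 1 / (5 * (a n : ℝ≥0∞))
        = (a n : ℝ≥0∞) * (1 / (5 * (a n : ℝ≥0∞) ^ 2)) := by
          have ha0 : (a n : ℝ≥0∞) ≠ 0 := by
            exact_mod_cast (hpos n).ne'
          have hat : (a n : ℝ≥0∞) ≠ ⊤ := ENNReal.natCast_ne_top _
          rw [one_div, one_div, pow_two, show 5 * ((a n : ℝ≥0∞) * a n) = (a n) * (5 * a n) by ring,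
            ENNReal.mul_inv (Or.inl ha0) (Or.inl hat), ← mul_assoc,
            ENNReal.mul_inv_cancel ha0 hat, one_mul]
      _ ≤ ∑' m : Fin (a n), g (F ⟨n, m⟩).1 := by
          rw [tsum_fintype]
          have := Finset.card_nsmul_le_sum (Finset.univ : Finset (Fin (a n)))
            (fun m => g (F ⟨n, m⟩).1) (1 / (5 * (a n : ℝ≥0∞) ^ 2)) (fun m _ => hterm m)
          simpa [nsmul_eq_mul, Finset.card_univ] using this
  have htop : (⊤ : ℝ≥0∞) ≤ ∑' x, g (F x).1 := by
    rw [ENNReal.tsum_sigma']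
    calc (⊤ : ℝ≥0∞) = ∑' n, 1 / (5 * (a n : ℝ≥0∞)) := by
          have : ∀ n, 1 / (5 * (a n : ℝ≥0∞)) = 5⁻¹ * (1 / (a n : ℝ≥0∞)) := by
            intro n
            rw [one_div, one_div, ENNReal.mul_inv (Or.inl (by norm_num)) (Or.inl (by norm_num))]
          rw [tsum_congr this, ENNReal.tsum_mul_left, hdiv, ENNReal.mul_top (by norm_num)]
      _ ≤ ∑' n, ∑' m : Fin (a n), g (F ⟨n, m⟩).1 := ENNReal.tsum_le_tsum hlow
  exact top_le_iff.mp (htop.trans key)
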